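/- arXiv:1905.10866 — 2 statements merged into one kernel-verified Lean document; each statement's English description precedes it below -/
import Mathlib

section
/- If A is an n×n real matrix all of whose (complex) eigenvalues have modulus strictly less than one, then the series P = Σ_{k=0}^∞ (Aᵀ)^k Q A^k converges for any symmetric positive definite matrix Q, and P is symmetric positive definite and satisfies Aᵀ P A − P = −Q. -/
open Matrix
open scoped ENNReal NNReal

section Aux

attribute [local instance] Matrix.frobeniusSeminormedAddCommGroup
  Matrix.frobeniusNormedAddCommGroup Matrix.frobeniusNormedRing
  Matrix.frobeniusNormedSpace Matrix.frobeniusNormedAlgebra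

private lemma aux_entry_le {n : ℕ} {α : Type*} [RCLike α] (M : Matrix (Fin n) (Fin n) α)
    (i j : Fin n) : ‖M i j‖ ≤ ‖M‖ := by
  have h1 : ‖M i j‖₊ ≤ ‖M‖₊ := by
    rw [Matrix.frobenius_nnnorm_def]
    have h2 : ‖M i j‖₊ ^ (2 : ℝ) ≤ ∑ a, ∑ b, ‖M a b‖₊ ^ (2 : ℝ) := by
      calc ‖M i j‖₊ ^ (2 : ℝ) ≤ ∑ b, ‖M i b‖₊ ^ (2 : ℝ) :=
            Finset.single_le_sum (f := fun b => ‖M i b‖₊ ^ (2 : ℝ))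
              (fun _ _ => zero_le) (Finset.mem_univ j)
        _ ≤ ∑ a, ∑ b, ‖M a b‖₊ ^ (2 : ℝ) :=
            Finset.single_le_sum (f := fun a => ∑ b, ‖M a b‖₊ ^ (2 : ℝ))
              (fun _ _ => zero_le) (Finset.mem_univ i)
    calc ‖M i j‖₊ = (‖M i j‖₊ ^ (2 : ℝ)) ^ (1 / 2 : ℝ) := by
          rw [← NNReal.rpow_mul]; norm_num
      _ ≤ (∑ a, ∑ b, ‖M a b‖₊ ^ (2 : ℝ)) ^ (1 / 2 : ℝ) :=
          NNReal.rpow_le_rpow h2 (by norm_num)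
  exact_mod_cast h1

private lemma aux_summable (n : ℕ) (A Q : Matrix (Fin n) (Fin n) ℝ)
    (hspec : ∀ μ ∈ spectrum ℂ (A.map Complex.ofReal), ‖μ‖ < 1) (i j : Fin n) :
    Summable (fun k : ℕ => ((Aᵀ) ^ k * Q * A ^ k) i j) := by
  haveI : NeZero n := ⟨(Fin.pos i).ne'⟩
  set B : Matrix (Fin n) (Fin n) ℂ := A.map Complex.ofReal with hB
  have hρ : spectralRadius ℂ B < 1 := by
    have := spectrum.spectralRadius_lt_of_forall_lt (r := 1) B (fun z hz => by
      have h' : ‖z‖ < 1 := by exact hspec z hz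
      exact_mod_cast h')
    simpa using this
  obtain ⟨r, hr1, hr2⟩ := ENNReal.lt_iff_exists_nnreal_btwn.mp hρ
  have hrlt1 : (r : ℝ) < 1 := by exact_mod_cast hr2
  have hev : ∀ᶠ (k : ℕ) in Filter.atTop, (‖B ^ k‖₊ : ℝ≥0∞) ^ (1 / (k : ℝ)) < r :=
    (spectrum.pow_nnnorm_pow_one_div_tendsto_nhds_spectralRadius B).eventually_lt_const hr1
  have hev2 : ∀ᶠ k in Filter.atTop, ‖B ^ k‖₊ ≤ r ^ k := by
    filter_upwards [hev, Filter.eventually_ge_atTop 1] with k hk hk1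
    have hkne : (k : ℝ) ≠ 0 := Nat.cast_ne_zero.mpr (by omega)
    have h3 : ((‖B ^ k‖₊ : ℝ≥0∞) ^ (1 / (k : ℝ))) ^ (k : ℝ) ≤ (r : ℝ≥0∞) ^ (k : ℝ) :=
      ENNReal.rpow_le_rpow hk.le (Nat.cast_nonneg k)
    rw [← ENNReal.rpow_mul, one_div, inv_mul_cancel₀ hkne, ENNReal.rpow_one,
      ENNReal.rpow_natCast] at h3
    exact_mod_cast h3
  have hBk : ∀ k : ℕ, B ^ k = (A ^ k).map Complex.ofReal := by
    intro k
    have := map_pow (Complex.ofRealHom.mapMatrix) A k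
    exact this.symm
  have hnorm : ∀ k : ℕ, ‖A ^ k‖ = ‖B ^ k‖ := by
    intro k
    rw [hBk k]
    exact (Matrix.frobenius_norm_map_eq (A ^ k) Complex.ofReal
      (fun a => by rw [Complex.norm_real])).symm
  -- geometric comparison
  have hgeom : Summable (fun k : ℕ => ‖Q‖ * ((r : ℝ) ^ 2) ^ k) := by
    refine (summable_geometric_of_lt_one (by positivity) ?_).mul_left _
    nlinarith [r.coe_nonneg]
  have hsumnorm : Summable (fun k : ℕ => ‖(Aᵀ) ^ k * Q * A ^ k‖) := by
    refine Summable.of_norm_bounded_eventually_nat hgeom ?_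
    filter_upwards [hev2] with k hk
    have hAk : ‖A ^ k‖ ≤ (r : ℝ) ^ k := by
      rw [hnorm k]
      calc ‖B ^ k‖ = ((‖B ^ k‖₊ : ℝ≥0) : ℝ) := by rw [coe_nnnorm]
        _ ≤ ((r ^ k : ℝ≥0) : ℝ) := by exact_mod_cast hk
        _ = (r : ℝ) ^ k := by push_cast; ring
    have hT : ‖(Aᵀ) ^ k‖ = ‖A ^ k‖ := by
      rw [← Matrix.transpose_pow, Matrix.frobenius_norm_transpose]
    have hb : ‖(Aᵀ) ^ k * Q * A ^ k‖ ≤ ‖A ^ k‖ * ‖Q‖ * ‖A ^ k‖ := by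
      calc ‖(Aᵀ) ^ k * Q * A ^ k‖ ≤ ‖(Aᵀ) ^ k * Q‖ * ‖A ^ k‖ := norm_mul_le _ _
        _ ≤ ‖(Aᵀ) ^ k‖ * ‖Q‖ * ‖A ^ k‖ := by
            have := norm_mul_le ((Aᵀ) ^ k) Q
            have h0 : (0:ℝ) ≤ ‖A ^ k‖ := norm_nonneg _
            nlinarith
        _ = ‖A ^ k‖ * ‖Q‖ * ‖A ^ k‖ := by rw [hT]
    rw [norm_norm]
    have h0 : (0:ℝ) ≤ ‖A ^ k‖ := norm_nonneg _
    have h0' : (0:ℝ) ≤ ‖Q‖ := norm_nonneg _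
    have h0r : (0:ℝ) ≤ (r:ℝ) ^ k := by positivity
    calc ‖(Aᵀ) ^ k * Q * A ^ k‖ ≤ ‖A ^ k‖ * ‖Q‖ * ‖A ^ k‖ := hb
      _ ≤ ((r:ℝ) ^ k) * ‖Q‖ * ((r:ℝ) ^ k) := by gcongr
      _ = ‖Q‖ * ((r : ℝ) ^ 2) ^ k := by ring
  exact Summable.of_norm_bounded hsumnorm (fun k => aux_entry_le _ i j)

end Aux

/-- If all complex eigenvalues of the real matrix `A` have modulus strictly less than one,
then for any symmetric positive definite `Q` the series `P = Σ_{k} (Aᵀ)^k Q A^k` converges,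
and its sum `P` is symmetric positive definite and satisfies `Aᵀ P A − P = −Q`. -/
theorem stmt_1 (n : ℕ) (A Q : Matrix (Fin n) (Fin n) ℝ)
    (hspec : ∀ μ ∈ spectrum ℂ (A.map Complex.ofReal), ‖μ‖ < 1)
    (hQ : Q.PosDef) :
    ∃ P : Matrix (Fin n) (Fin n) ℝ,
      HasSum (fun k : ℕ => (Aᵀ) ^ k * Q * A ^ k) P ∧
      P.IsSymm ∧ P.PosDef ∧ Aᵀ * P * A - P = -Q := by
  classical
  set f : ℕ → Matrix (Fin n) (Fin n) ℝ := fun k => (Aᵀ) ^ k * Q * A ^ k with hf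
  have hsum : ∀ i j, Summable fun k => f k i j := fun i j => aux_summable n A Q hspec i j
  set P : Matrix (Fin n) (Fin n) ℝ := Matrix.of (fun i j => ∑' k, f k i j) with hPd
  have hP : HasSum f P :=
    Pi.hasSum.mpr (fun i => Pi.hasSum.mpr (fun j => (hsum i j).hasSum))
  have hQsymm : Qᵀ = Q := by
    ext i j
    have h := congrFun (congrFun hQ.1 i) j
    simpa using h
  have hfs : ∀ k, (f k)ᵀ = f k := by
    intro k
    simp only [hf]
    rw [Matrix.transpose_mul, Matrix.transpose_mul, Matrix.transpose_pow,
      Matrix.transpose_pow, Matrix.transpose_transpose, hQsymm, Matrix.mul_assoc]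
  have hPsymm : P.IsSymm := by
    show Pᵀ = P
    ext i j
    show P j i = P i j
    exact tsum_congr (fun k => (congrFun (congrFun (hfs k) j) i).symm)
  refine ⟨P, hP, hPsymm, Matrix.PosDef.of_dotProduct_mulVec_pos ?_ ?_, ?_⟩
  · -- IsHermitian
    show Pᴴ = P
    have : Pᴴ = Pᵀ := by ext i j; simp [Matrix.conjTranspose_apply]
    rw [this]; exact hPsymm
  · -- positivity
    intro x hx
    have hqf : ∀ k, x ⬝ᵥ (f k *ᵥ x) = (A ^ k *ᵥ x) ⬝ᵥ (Q *ᵥ (A ^ k *ᵥ x)) := by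
      intro k
      calc x ⬝ᵥ (f k *ᵥ x) = x ⬝ᵥ ((Aᵀ) ^ k *ᵥ (Q *ᵥ (A ^ k *ᵥ x))) := by
            rw [hf]; simp only [Matrix.mulVec_mulVec, Matrix.mul_assoc]
        _ = (x ᵥ* ((Aᵀ) ^ k)) ⬝ᵥ (Q *ᵥ (A ^ k *ᵥ x)) := Matrix.dotProduct_mulVec _ _ _
        _ = (A ^ k *ᵥ x) ⬝ᵥ (Q *ᵥ (A ^ k *ᵥ x)) := by
            rw [← Matrix.transpose_pow, Matrix.vecMul_transpose]
    have expand : ∀ M : Matrix (Fin n) (Fin n) ℝ,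
        x ⬝ᵥ (M *ᵥ x) = ∑ i, ∑ j, x i * (M i j * x j) := by
      intro M
      simp [dotProduct, Matrix.mulVec, Finset.mul_sum]
    have hquad : HasSum (fun k => x ⬝ᵥ (f k *ᵥ x)) (x ⬝ᵥ (P *ᵥ x)) := by
      simp_rw [expand]
      refine hasSum_sum (fun i _ => ?_)
      refine hasSum_sum (fun j _ => ?_)
      have h1 : HasSum (fun k => f k i j) (P i j) := (hsum i j).hasSum
      exact (h1.mul_right (x j)).mul_left (x i)
    have h0 : ∀ k, 0 ≤ x ⬝ᵥ (f k *ᵥ x) := by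
      intro k
      rw [hqf k]
      have := hQ.posSemidef.dotProduct_mulVec_nonneg (A ^ k *ᵥ x)
      simpa using this
    have hlt : 0 < x ⬝ᵥ (f 0 *ᵥ x) := by
      rw [hqf 0]
      have := hQ.dotProduct_mulVec_pos hx
      simpa using this
    calc (0:ℝ) < x ⬝ᵥ (f 0 *ᵥ x) := hlt
      _ ≤ x ⬝ᵥ (P *ᵥ x) := le_hasSum hquad 0 (fun k _ => h0 k)
      _ = star x ⬝ᵥ (P *ᵥ x) := by simp
  · -- Lyapunov equation
    have cont : Continuous fun M : Matrix (Fin n) (Fin n) ℝ => Aᵀ * M * A :=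
      (continuous_const.matrix_mul continuous_id).matrix_mul continuous_const
    let g : Matrix (Fin n) (Fin n) ℝ →+ Matrix (Fin n) (Fin n) ℝ :=
      { toFun := fun M => Aᵀ * M * A
        map_zero' := by simp
        map_add' := fun M N => by
          show Aᵀ * (M + N) * A = Aᵀ * M * A + Aᵀ * N * A
          rw [Matrix.mul_add, Matrix.add_mul] }
    have hmap : HasSum (fun k => Aᵀ * f k * A) (Aᵀ * P * A) := hP.map g cont
    have hshift : ∀ k, Aᵀ * f k * A = f (k + 1) := by
      intro k
      simp only [hf]
      rw [pow_succ A k, pow_succ' Aᵀ k]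
      simp [Matrix.mul_assoc]
    have h2 : HasSum (fun k => f (k + 1)) (Aᵀ * P * A) := by
      simp_rw [← hshift]; exact hmap
    have h3 : HasSum (fun k => f (k + 1)) (P - ∑ i ∈ Finset.range 1, f i) :=
      (hasSum_nat_add_iff' 1).mpr hP
    have h4 : Aᵀ * P * A = P - f 0 := by
      have := h2.unique h3
      simpa using this
    have hf0 : f 0 = Q := by simp [hf]
    rw [h4, hf0]
    abel
end

section
/- If A is an n×n real matrix with some eigenvalue of modulus greater than 1, and P satisfies Aᵀ P A − P = −I with P symmetric, then P is not positive semidefinite: there exists x ≠ 0 with xᵀ P x ≤ 0. -/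
open Matrix Complex

/-- If `A` has an eigenvalue of modulus greater than one and the symmetric matrix `P`
satisfies `Aᵀ P A − P = −I`, then `P` is not positive semidefinite: the quadratic form
`xᵀ P x` is nonpositive at some `x ≠ 0`. -/
theorem stmt_14 (n : ℕ) (A P : Matrix (Fin n) (Fin n) ℝ)
    (hPsym : Pᵀ = P)
    (hLyap : Aᵀ * P * A - P = -1)
    (lam : ℂ) (hlam : lam ∈ spectrum ℂ (A.map Complex.ofReal))
    (habs : 1 < ‖lam‖) :
    ∃ x : Fin n → ℝ, x ≠ 0 ∧ x ⬝ᵥ P *ᵥ x ≤ 0 := by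
  set B := A.map (Complex.ofReal) with hB
  set Pc := P.map (Complex.ofReal) with hPcdef
  -- eigenvector
  rw [spectrum.mem_iff] at hlam
  have hdet : (algebraMap ℂ (Matrix (Fin n) (Fin n) ℂ) lam - B).det = 0 := by
    by_contra h
    exact hlam ((Matrix.isUnit_iff_isUnit_det _).2 (isUnit_iff_ne_zero.2 h))
  obtain ⟨v, hv0, hv⟩ := (Matrix.exists_mulVec_eq_zero_iff).2 hdet
  have heig : B *ᵥ v = lam • v := by
    rw [Algebra.algebraMap_eq_smul_one, Matrix.sub_mulVec, Matrix.smul_mulVec,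
      Matrix.one_mulVec, sub_eq_zero] at hv
    exact hv.symm
  -- complexified Lyapunov
  have hLyapC : Bᵀ * Pc * B - Pc = -1 := by
    have := congrArg (Complex.ofRealHom.mapMatrix :
      Matrix (Fin n) (Fin n) ℝ →+* Matrix (Fin n) (Fin n) ℂ) hLyap
    simp only [map_sub, _root_.map_mul, map_neg, _root_.map_one, RingHom.mapMatrix_apply,
      Matrix.transpose_map] at this
    exact this
  have hBH : Bᴴ = Bᵀ := by
    ext i j
    simp [Matrix.conjTranspose_apply, hB, Matrix.map_apply]
  set s : ℂ := star v ⬝ᵥ Pc *ᵥ v with hs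
  -- key identity
  have key : ((Complex.normSq lam : ℂ) - 1) * s = -(star v ⬝ᵥ v) := by
    have h := congrArg (fun M : Matrix (Fin n) (Fin n) ℂ => star v ⬝ᵥ M *ᵥ v) hLyapC
    simp only [Matrix.sub_mulVec, dotProduct_sub, Matrix.neg_mulVec,
      Matrix.one_mulVec, dotProduct_neg] at h
    have h1 : star v ⬝ᵥ (Bᵀ * Pc * B) *ᵥ v = (Complex.normSq lam : ℂ) * s := by
      rw [← Matrix.mulVec_mulVec, ← Matrix.mulVec_mulVec, Matrix.dotProduct_mulVec,
        Matrix.vecMul_transpose]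
      have h2 : B *ᵥ star v = star (B *ᵥ v) := by
        rw [Matrix.star_mulVec, hBH, Matrix.vecMul_transpose]
      rw [h2, heig, star_smul, Matrix.mulVec_smul, smul_dotProduct,
        dotProduct_smul, smul_smul, smul_eq_mul,
        Complex.normSq_eq_conj_mul_self]
      rfl
    rw [h1] at h
    rw [sub_mul, one_mul]
    exact h
  -- the Hermitian form value is negative
  set c : ℂ := star v ⬝ᵥ v with hc
  have hceq : c = ((∑ i, Complex.normSq (v i) : ℝ) : ℂ) := by
    rw [hc]
    simp only [dotProduct, Pi.star_apply]
    push_cast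
    refine Finset.sum_congr rfl fun i _ => ?_
    rw [Complex.star_def, ← Complex.normSq_eq_conj_mul_self]
  have hN : 0 < ∑ i, Complex.normSq (v i) := by
    obtain ⟨i, hi⟩ := Function.ne_iff.1 hv0
    exact Finset.sum_pos' (fun j _ => Complex.normSq_nonneg _)
      ⟨i, Finset.mem_univ i, Complex.normSq_pos.2 hi⟩
  have hr : 1 < Complex.normSq lam := by
    rw [← Complex.sq_norm]
    nlinarith [habs]
  have key' : (Complex.normSq lam - 1) * s.re = -(∑ i, Complex.normSq (v i)) := by
    rw [show ((Complex.normSq lam : ℂ) - 1) = ((Complex.normSq lam - 1 : ℝ) : ℂ) by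
      push_cast; ring] at key
    have h := congrArg Complex.re key
    rw [hceq] at h
    simpa [Complex.re_ofReal_mul] using h
  have hslt : s.re < 0 := by nlinarith [key', hN, hr]
  -- decompose into real and imaginary parts
  set x : Fin n → ℝ := fun i => (v i).re with hx
  set y : Fin n → ℝ := fun i => (v i).im with hy
  have hsre : s.re = x ⬝ᵥ P *ᵥ x + y ⬝ᵥ P *ᵥ y := by
    rw [hs]
    simp only [dotProduct, Matrix.mulVec, Pi.star_apply, hPcdef, Matrix.map_apply,
      Finset.mul_sum, Complex.re_sum]
    rw [← Finset.sum_add_distrib]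
    refine Finset.sum_congr rfl fun i _ => ?_
    rw [← Finset.sum_add_distrib]
    refine Finset.sum_congr rfl fun j _ => ?_
    simp only [Complex.star_def, Complex.mul_re, Complex.mul_im, Complex.conj_re,
      Complex.conj_im, Complex.ofReal_re, Complex.ofReal_im, hx, hy]
    ring
  have hsum : x ⬝ᵥ P *ᵥ x + y ⬝ᵥ P *ᵥ y < 0 := hsre ▸ hslt
  rcases lt_or_ge (x ⬝ᵥ P *ᵥ x) 0 with h | h
  · refine ⟨x, ?_, h.le⟩
    intro h0
    rw [h0] at h
    simp at h
  · have hyneg : y ⬝ᵥ P *ᵥ y < 0 := by linarith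
    refine ⟨y, ?_, hyneg.le⟩
    intro h0
    rw [h0] at hyneg
    simp at hyneg
end
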